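/- Let (V, ω) be a 2n-dimensional symplectic vector space. For 0 ≤ r ≤ n, the map L^{r} : Λ^{n−r} V* → Λ^{n+r} V*, φ ↦ ω^r ∧ φ, is a linear isomorphism (hard Lefschetz at the level of exterior algebra). -/

import Mathlib

set_option synthInstance.maxHeartbeats 1000000
set_option maxHeartbeats 2000000

noncomputable section

/-- The algebra of (constant-coefficient) forms on `V`: the exterior algebra of `V*`. -/
abbrev Forms (V : Type*) [AddCommGroup V] [Module ℝ V] :=
  ExteriorAlgebra ℝ (Module.Dual ℝ V)

/-- Interior product (contraction) `ι_X` of forms by a vector `X : V`. -/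
def interiorV {V : Type*} [AddCommGroup V] [Module ℝ V] (X : V) :
    Forms V →ₗ[ℝ] Forms V :=
  CliffordAlgebra.contractLeft (Module.Dual.eval ℝ V X)

/-- The decomposable form `ψ₁ ∧ ⋯ ∧ ψᵣ`. -/
def wedgeList {V : Type*} [AddCommGroup V] [Module ℝ V] {r : ℕ}
    (ψ : Fin r → Module.Dual ℝ V) : Forms V :=
  (List.ofFn fun i => ExteriorAlgebra.ι ℝ (ψ i)).prod

namespace HLaux

variable {V : Type*} [AddCommGroup V] [Module ℝ V]

local notation "ιι" => ExteriorAlgebra.ι ℝ (M := Module.Dual ℝ V)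
local notation "Λ[" k "]" => (⋀[ℝ]^(k) (Module.Dual ℝ V) : Submodule ℝ (Forms V))

lemma interior_ι_mul (X : V) (φ : Module.Dual ℝ V) (y : Forms V) :
    interiorV X (ιι φ * y) = φ X • y - ιι φ * interiorV X y := by
  unfold interiorV
  exact CliffordAlgebra.contractLeft_ι_mul
    (Q := (0 : QuadraticForm ℝ (Module.Dual ℝ V))) (Module.Dual.eval ℝ V X) φ y

lemma interior_algebraMap (X : V) (r : ℝ) :
    interiorV X (algebraMap ℝ (Forms V) r) = 0 := by
  unfold interiorV
  exact CliffordAlgebra.contractLeft_algebraMap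
    (Q := (0 : QuadraticForm ℝ (Module.Dual ℝ V))) (Module.Dual.eval ℝ V X) r

lemma interiorV_add (X Y : V) : interiorV (X + Y) = (interiorV X : Forms V →ₗ[ℝ] Forms V) + interiorV Y := by
  unfold interiorV; rw [map_add, map_add]

lemma interiorV_smul (c : ℝ) (X : V) : interiorV (c • X) = c • (interiorV X : Forms V →ₗ[ℝ] Forms V) := by
  unfold interiorV; rw [map_smul, map_smul]

lemma ι_anticomm (φ ψ : Module.Dual ℝ V) :
    ιι φ * ιι ψ = -(ιι ψ * ιι φ) := by
  have := ExteriorAlgebra.ι_add_mul_swap (R := ℝ) φ ψ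
  rw [eq_neg_iff_add_eq_zero]
  exact this

/-- Contraction maps `Λ^k` to `Λ^(k-1)` and kills `Λ^0`. -/
lemma interior_mem (X : V) {k : ℕ} {x : Forms V} (hx : x ∈ Λ[k]) :
    interiorV X x ∈ Λ[k - 1] ∧ (k = 0 → interiorV X x = 0) := by
  induction hx using Submodule.pow_induction_on_left' with
  | algebraMap r =>
      exact ⟨by rw [interior_algebraMap]; exact zero_mem _,
        fun _ => interior_algebraMap X r⟩
  | add x y i hx hy ihx ihy =>
      refine ⟨by rw [map_add]; exact add_mem ihx.1 ihy.1, fun h => ?_⟩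
      rw [map_add, ihx.2 h, ihy.2 h, add_zero]
  | mem_mul m hm i x hx ih =>
      obtain ⟨φ, rfl⟩ := hm
      refine ⟨?_, fun h => absurd h (Nat.succ_ne_zero i)⟩
      rw [interior_ι_mul]
      have h1 : (φ X • x : Forms V) ∈ Λ[i] := Submodule.smul_mem _ _ hx
      have h2 : ιι φ * interiorV X x ∈ Λ[i] := by
        rcases Nat.eq_zero_or_pos i with h0 | hpos
        · subst h0; rw [ih.2 rfl, mul_zero]; exact zero_mem _
        · have hmem : interiorV X x ∈ Λ[i - 1] := ih.1
          have := Submodule.mul_mem_mul (LinearMap.mem_range_self ιι φ) hmem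
          rw [← pow_succ'] at this
          have hi : i - 1 + 1 = i := Nat.succ_pred_eq_of_pos hpos
          rwa [hi] at this
      have := sub_mem h1 h2
      simpa using this

lemma interior_mem_zero (X : V) {x : Forms V} (hx : x ∈ Λ[0]) : interiorV X x = 0 :=
  (interior_mem X hx).2 rfl

lemma interior_ι (X : V) (φ : Module.Dual ℝ V) :
    interiorV X (ιι φ) = φ X • (1 : Forms V) := by
  unfold interiorV
  rw [CliffordAlgebra.contractLeft_ι (Q := (0 : QuadraticForm ℝ (Module.Dual ℝ V)))
    (Module.Dual.eval ℝ V X) φ]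
  rw [Algebra.algebraMap_eq_smul_one]
  rfl

/-- Contraction is an (even-part) derivation against a 2-form. -/
lemma deriv2 {w : Forms V} (hw : w ∈ Λ[2]) (X : V) (y : Forms V) :
    interiorV X (w * y) = interiorV X w * y + w * interiorV X y := by
  have hw' : w ∈ LinearMap.range ιι * LinearMap.range ιι := by
    rw [← pow_two]; exact hw
  clear hw
  induction hw' using Submodule.mul_induction_on' with
  | mem_mul_mem a ha c hc =>
      obtain ⟨α, rfl⟩ := ha
      obtain ⟨γ, rfl⟩ := hc
      rw [mul_assoc, interior_ι_mul, interior_ι_mul, interior_ι_mul, interior_ι]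
      simp only [mul_sub, sub_mul, smul_mul_assoc, mul_smul_comm, mul_assoc, one_mul]
      abel
  | add u hu v hv ihu ihv =>
      simp only [add_mul, map_add, ihu, ihv]
      abel

section Main

variable (n : ℕ) (ω : LinearMap.BilinForm ℝ V) (sharp : Module.Dual ℝ V →ₗ[ℝ] V)
variable (b : Module.Basis (Fin (2 * n)) ℝ V)

/-- The dual Lefschetz-type operator `Λ`. -/
def Lam : Forms V →ₗ[ℝ] Forms V :=
  ∑ i, (interiorV (sharp (b.dualBasis i))).comp (interiorV (b i))

/-- The degree-counting operator `N`. -/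
def Nop : Forms V →ₗ[ℝ] Forms V :=
  ∑ i, (LinearMap.mulLeft ℝ ((ExteriorAlgebra.ι ℝ) (b.dualBasis i))).comp (interiorV (b i))

lemma Lam_apply (x : Forms V) :
    Lam n sharp b x = ∑ i, interiorV (sharp (b.dualBasis i)) (interiorV (b i) x) := by
  simp [Lam]

lemma Nop_apply (x : Forms V) :
    Nop n b x = ∑ i, ιι (b.dualBasis i) * interiorV (b i) x := by
  simp [Nop]

lemma dual_expand (f : Module.Dual ℝ V) : (∑ j, f (b j) • b.dualBasis j) = f := by
  have := b.dualBasis.sum_repr f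
  simpa [Module.Basis.dualBasis_repr] using this

lemma sumA (halt : ω.IsAlt) (hsharp' : ∀ X : V, sharp (ω X) = X)
    {W : Type*} [AddCommGroup W] [Module ℝ W]
    (G : V →ₗ[ℝ] Module.Dual ℝ V →ₗ[ℝ] W) :
    ∑ i, G (sharp (b.dualBasis i)) (ω (b i)) = -∑ i, G (b i) (b.dualBasis i) := by
  have key : ∀ j, (∑ i, ((ω (b i)) (b j)) • sharp (b.dualBasis i)) = -(b j) := by
    intro j
    have h1 : ∀ i, (ω (b i)) (b j) = -((ω (b j)) (b i)) := by
      intro i; rw [← LinearMap.IsAlt.neg halt (b j) (b i)]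
    calc ∑ i, ((ω (b i)) (b j)) • sharp (b.dualBasis i)
        = -∑ i, ((ω (b j)) (b i)) • sharp (b.dualBasis i) := by
          rw [← Finset.sum_neg_distrib]
          exact Finset.sum_congr rfl fun i _ => by rw [h1 i, neg_smul]
      _ = -sharp (∑ i, ((ω (b j)) (b i)) • b.dualBasis i) := by
          rw [map_sum]; simp [map_smul]
      _ = -(b j) := by rw [dual_expand n b (ω (b j)), hsharp']
  calc ∑ i, G (sharp (b.dualBasis i)) (ω (b i))
      = ∑ i, ∑ j, ((ω (b i)) (b j)) • G (sharp (b.dualBasis i)) (b.dualBasis j) := by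
        refine Finset.sum_congr rfl fun i _ => ?_
        conv_lhs => rw [← dual_expand n b (ω (b i))]
        rw [map_sum]
        exact Finset.sum_congr rfl fun j _ => by rw [map_smul]
    _ = ∑ j, G (∑ i, ((ω (b i)) (b j)) • sharp (b.dualBasis i)) (b.dualBasis j) := by
        rw [Finset.sum_comm]
        refine Finset.sum_congr rfl fun j _ => ?_
        rw [map_sum, LinearMap.sum_apply]
        exact Finset.sum_congr rfl fun i _ => by rw [map_smul, LinearMap.smul_apply]
    _ = -∑ i, G (b i) (b.dualBasis i) := by
        rw [← Finset.sum_neg_distrib]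
        refine Finset.sum_congr rfl fun j _ => ?_
        rw [key j, map_neg, LinearMap.neg_apply]

lemma N_homog {k : ℕ} {x : Forms V} (hx : x ∈ Λ[k]) :
    Nop n b x = (k : ℝ) • x := by
  induction hx using Submodule.pow_induction_on_left' with
  | algebraMap r =>
      rw [Nop_apply]
      simp [interior_algebraMap]
  | add x y i hx hy ihx ihy =>
      rw [map_add, ihx, ihy, smul_add]
  | mem_mul m hm i x hx ih =>
      obtain ⟨φ, rfl⟩ := hm
      rw [Nop_apply]
      have step : ∀ i' : Fin (2 * n), ιι (b.dualBasis i') * interiorV (b i') (ιι φ * x)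
          = φ (b i') • (ιι (b.dualBasis i') * x)
            + ιι φ * (ιι (b.dualBasis i') * interiorV (b i') x) := by
        intro i'
        rw [interior_ι_mul, mul_sub, mul_smul_comm, ← mul_assoc, ι_anticomm, neg_mul,
          mul_assoc, sub_neg_eq_add]
      rw [Finset.sum_congr rfl fun i' _ => step i', Finset.sum_add_distrib]
      have e1 : (∑ i' : Fin (2 * n), φ (b i') • (ιι (b.dualBasis i') * x)) = ιι φ * x := by
        simp_rw [← smul_mul_assoc]
        rw [← Finset.sum_mul, ← Finset.sum_congr rfl fun j _ => (map_smul ιι (φ (b j)) (b.dualBasis j)), ← map_sum, dual_expand n b φ]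
      rw [e1]
      have e2 : (∑ i' : Fin (2 * n), ιι φ * (ιι (b.dualBasis i') * interiorV (b i') x))
          = ιι φ * Nop n b x := by
        rw [← Finset.mul_sum, Nop_apply]
      rw [e2, ih, mul_smul_comm]
      push_cast
      rw [add_smul, one_smul]
      abel

variable (ωF : Forms V)

lemma comm0 (halt : ω.IsAlt) (hsharp : ∀ φ : Module.Dual ℝ V, ω (sharp φ) = φ)
    (hsharp' : ∀ X : V, sharp (ω X) = X)
    (hωF : ωF ∈ Λ[2]) (hωFcontr : ∀ X : V, interiorV X ωF = ιι (ω X))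
    (y : Forms V) :
    Lam n sharp b (ωF * y)
      = ωF * Lam n sharp b y + (2 : ℝ) • Nop n b y - (2 * (n : ℝ)) • y := by
  have step : ∀ i : Fin (2 * n),
      interiorV (sharp (b.dualBasis i)) (interiorV (b i) (ωF * y))
        = ((ω (b i)) (sharp (b.dualBasis i))) • y
          - ιι (ω (b i)) * interiorV (sharp (b.dualBasis i)) y
          + (ιι (b.dualBasis i) * interiorV (b i) y
             + ωF * interiorV (sharp (b.dualBasis i)) (interiorV (b i) y)) := by
    intro i
    rw [deriv2 hωF (b i) y, hωFcontr, map_add, interior_ι_mul,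
      deriv2 hωF (sharp (b.dualBasis i)) _, hωFcontr, hsharp]
  rw [Lam_apply, Finset.sum_congr rfl fun i _ => step i, Finset.sum_add_distrib,
    Finset.sum_sub_distrib]
  have T1 : (∑ i, ((ω (b i)) (sharp (b.dualBasis i))) • y) = (-(2 * (n:ℝ))) • y := by
    rw [← Finset.sum_smul]
    congr 1
    have := sumA n ω sharp b halt hsharp'
      (LinearMap.flip (LinearMap.id : Module.Dual ℝ V →ₗ[ℝ] (V →ₗ[ℝ] ℝ)))
    simp only [LinearMap.flip_apply, LinearMap.id_apply] at this
    rw [this]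
    simp [Module.Basis.dualBasis_apply_self, Finset.card_univ]
  have T2 : (∑ i, ιι (ω (b i)) * interiorV (sharp (b.dualBasis i)) y) = -Nop n b y := by
    have := sumA n ω sharp b halt hsharp'
      (LinearMap.mk₂ ℝ (fun X φ => ιι φ * interiorV X y)
        (fun X X' φ => by rw [interiorV_add]; simp [mul_add]
        )
        (fun c X φ => by rw [interiorV_smul]; simp [mul_smul_comm]
        )
        (fun X φ φ' => by rw [map_add, add_mul]
        )
        (fun c X φ => by rw [map_smul, smul_mul_assoc]
        ))
    simp only [LinearMap.mk₂_apply] at this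
    rw [this, Nop_apply]
  have T4 : (∑ i, ωF * interiorV (sharp (b.dualBasis i)) (interiorV (b i) y))
      = ωF * Lam n sharp b y := by
    rw [← Finset.mul_sum, Lam_apply]
  rw [Finset.sum_add_distrib, T1, T2, T4, ← Nop_apply, two_smul, neg_smul]
  abel

lemma comm_homog (halt : ω.IsAlt) (hsharp : ∀ φ : Module.Dual ℝ V, ω (sharp φ) = φ)
    (hsharp' : ∀ X : V, sharp (ω X) = X)
    (hωF : ωF ∈ Λ[2]) (hωFcontr : ∀ X : V, interiorV X ωF = ιι (ω X))
    {k : ℕ} {y : Forms V} (hy : y ∈ Λ[k]) :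
    Lam n sharp b (ωF * y)
      = ωF * Lam n sharp b y + (2 * (k : ℝ) - 2 * (n : ℝ)) • y := by
  rw [comm0 n ω sharp b ωF halt hsharp hsharp' hωF hωFcontr y, N_homog n b hy, smul_smul,
    sub_smul]
  norm_num
  abel

lemma Lam_mem {k : ℕ} {x : Forms V} (hx : x ∈ Λ[k]) :
    Lam n sharp b x ∈ Λ[k - 2] := by
  rw [Lam_apply]
  refine Submodule.sum_mem _ fun i _ => ?_
  have h2 := (interior_mem (sharp (b.dualBasis i)) (interior_mem (b i) hx).1).1
  have : k - 1 - 1 = k - 2 := by omega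
  rwa [this] at h2

lemma Lam_zero {k : ℕ} {x : Forms V} (hx : x ∈ Λ[k]) (hk : k ≤ 1) :
    Lam n sharp b x = 0 := by
  rw [Lam_apply]
  refine Finset.sum_eq_zero fun i _ => ?_
  rcases Nat.lt_or_ge k 1 with h0 | h1
  · have : k = 0 := by omega
    subst this
    rw [interior_mem_zero (b i) hx, map_zero]
  · have hk1 : k = 1 := by omega
    subst hk1
    have : interiorV (b i) x ∈ Λ[0] := by simpa using (interior_mem (b i) hx).1
    exact interior_mem_zero _ this

lemma Lam_pow_mem {k : ℕ} {x : Forms V} (hx : x ∈ Λ[k]) (t : ℕ) :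
    ((Lam n sharp b) ^ t) x ∈ Λ[k - 2 * t] := by
  induction t generalizing k x with
  | zero => simpa using hx
  | succ t ih =>
      have h1 : ((Lam n sharp b) ^ (t + 1)) x = ((Lam n sharp b) ^ t) (Lam n sharp b x) := by
        rw [pow_succ, Module.End.mul_apply]
      rw [h1]
      have := ih (Lam_mem n sharp b hx)
      have e : k - 2 - 2 * t = k - 2 * (t + 1) := by omega
      rwa [e] at this

lemma Lam_pow_zero {k : ℕ} {x : Forms V} (hx : x ∈ Λ[k]) {t : ℕ} (ht : k < 2 * t) :
    ((Lam n sharp b) ^ t) x = 0 := by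
  induction t generalizing k x with
  | zero => omega
  | succ t ih =>
      have h1 : ((Lam n sharp b) ^ (t + 1)) x = ((Lam n sharp b) ^ t) (Lam n sharp b x) := by
        rw [pow_succ, Module.End.mul_apply]
      rcases Nat.lt_or_ge k 2 with h2 | h2
      · rw [h1, Lam_zero n sharp b hx (by omega), map_zero]
      · rw [h1]
        exact ih (Lam_mem n sharp b hx) (by omega)

lemma pow_mul_mem (hωF : ωF ∈ Λ[2]) {k : ℕ} {y : Forms V} (hy : y ∈ Λ[k]) (s : ℕ) :
    ωF ^ s * y ∈ Λ[2 * s + k] := by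
  have h1 : ωF ^ s ∈ Λ[2 * s] := by
    have := Submodule.pow_mem_pow _ hωF s
    rwa [← pow_mul] at this
  have := Submodule.mul_mem_mul h1 hy
  rwa [← pow_add] at this

lemma powL (halt : ω.IsAlt) (hsharp : ∀ φ : Module.Dual ℝ V, ω (sharp φ) = φ)
    (hsharp' : ∀ X : V, sharp (ω X) = X)
    (hωF : ωF ∈ Λ[2]) (hωFcontr : ∀ X : V, interiorV X ωF = ιι (ω X))
    {k : ℕ} {y : Forms V} (hy : y ∈ Λ[k]) (m : ℕ) :
    Lam n sharp b (ωF ^ (m + 1) * y)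
      = ωF ^ (m + 1) * Lam n sharp b y
        + (2 * ((m : ℝ) + 1) * ((k : ℝ) + (m : ℝ) - (n : ℝ))) • (ωF ^ m * y) := by
  induction m with
  | zero =>
      rw [pow_one, pow_zero, one_mul, comm_homog n ω sharp b ωF halt hsharp hsharp' hωF hωFcontr hy]
      norm_num
      congr 1
      ring
  | succ m ih =>
      have h1 : ωF ^ (m + 2) * y = ωF * (ωF ^ (m + 1) * y) := by
        rw [← mul_assoc, ← pow_succ']
      have hmem : ωF ^ (m + 1) * y ∈ Λ[2 * (m + 1) + k] :=
        pow_mul_mem ωF hωF hy (m + 1)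
      rw [h1, comm_homog n ω sharp b ωF halt hsharp hsharp' hωF hωFcontr hmem, ih]
      rw [mul_add, ← mul_assoc, ← pow_succ', mul_smul_comm, ← mul_assoc, ← pow_succ']
      rw [add_assoc, ← add_smul]
      congr 2
      push_cast
      ring

lemma powM (halt : ω.IsAlt) (hsharp : ∀ φ : Module.Dual ℝ V, ω (sharp φ) = φ)
    (hsharp' : ∀ X : V, sharp (ω X) = X)
    (hωF : ωF ∈ Λ[2]) (hωFcontr : ∀ X : V, interiorV X ωF = ιι (ω X))
    {j : ℕ} {z : Forms V} (hz : z ∈ Λ[j]) (t : ℕ) :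
    ((Lam n sharp b) ^ (t + 1)) (ωF * z)
      = ωF * ((Lam n sharp b) ^ (t + 1)) z
        + (2 * ((t : ℝ) + 1) * ((j : ℝ) - (n : ℝ) - (t : ℝ))) • (((Lam n sharp b) ^ t) z) := by
  induction t with
  | zero =>
      rw [pow_one, pow_zero, Module.End.one_apply,
        comm_homog n ω sharp b ωF halt hsharp hsharp' hωF hωFcontr hz]
      norm_num
      congr 1
      ring
  | succ t ih =>
      have hout : ∀ w : Forms V, ((Lam n sharp b) ^ (t + 2)) w
          = Lam n sharp b (((Lam n sharp b) ^ (t + 1)) w) := by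
        intro w; rw [pow_succ', Module.End.mul_apply]
      have hfold : ∀ (s : ℕ) (w : Forms V),
          Lam n sharp b (((Lam n sharp b) ^ s) w) = ((Lam n sharp b) ^ (s + 1)) w :=
        fun s w => by rw [pow_succ', Module.End.mul_apply]
      by_cases hle : 2 * (t + 1) ≤ j
      · have hmem : ((Lam n sharp b) ^ (t + 1)) z ∈ Λ[j - 2 * (t + 1)] :=
          Lam_pow_mem n sharp b hz (t + 1)
        rw [hout, ih, map_add, map_smul,
          comm_homog n ω sharp b ωF halt hsharp hsharp' hωF hωFcontr hmem,
          hfold, hfold]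
        rw [add_assoc, ← add_smul]
        congr 2
        have : ((j - 2 * (t + 1) : ℕ) : ℝ) = (j : ℝ) - 2 * ((t : ℝ) + 1) := by
          push_cast [Nat.cast_sub hle]
          ring
        rw [this]
        push_cast
        ring
      · have h1 : ((Lam n sharp b) ^ (t + 1)) z = 0 :=
          Lam_pow_zero n sharp b hz (by omega)
        have h2 : ((Lam n sharp b) ^ (t + 2)) z = 0 :=
          Lam_pow_zero n sharp b hz (by omega)
        have h0 : ((Lam n sharp b) ^ t) ((Lam n sharp b) z) = 0 := by
          rw [← Module.End.mul_apply, ← pow_succ]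
          exact h1
        rw [hout, ih, h1, h2]
        simp only [mul_zero, zero_add, map_add, map_smul, map_zero, smul_zero, add_zero]
        rw [← Module.End.mul_apply, ← pow_succ', h1, smul_zero]

lemma descent (halt : ω.IsAlt) (hsharp : ∀ φ : Module.Dual ℝ V, ω (sharp φ) = φ)
    (hsharp' : ∀ X : V, sharp (ω X) = X)
    (hωF : ωF ∈ Λ[2]) (hωFcontr : ∀ X : V, interiorV X ωF = ιι (ω X))
    {k : ℕ} {x : Forms V} (hx : x ∈ Λ[k]) (hk : k ≤ n)
    (hlam : Lam n sharp b x = 0) :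
    ∀ m : ℕ, m ≤ n - k → ωF ^ m * x = 0 → x = 0 := by
  intro m
  induction m with
  | zero => intro _ h; simpa using h
  | succ m ih =>
      intro hm h
      have hp := powL n ω sharp b ωF halt hsharp hsharp' hωF hωFcontr hx m
      rw [h, map_zero, hlam, mul_zero, zero_add] at hp
      have hc : (2 * ((m : ℝ) + 1) * ((k : ℝ) + (m : ℝ) - (n : ℝ))) ≠ 0 := by
        have h1 : ((k + m : ℕ) : ℝ) < (n : ℝ) := Nat.cast_lt.mpr (by omega)
        push_cast at h1
        intro h0
        rcases mul_eq_zero.mp h0 with h2 | h2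
        · have : (0:ℝ) ≤ (m : ℝ) := Nat.cast_nonneg m
          nlinarith
        · linarith
      have hzz := (smul_eq_zero.mp hp.symm).resolve_left hc
      exact ih (by omega) hzz

include b in
lemma main_inj (halt : ω.IsAlt) (hsharp : ∀ φ : Module.Dual ℝ V, ω (sharp φ) = φ)
    (hsharp' : ∀ X : V, sharp (ω X) = X)
    (hωF : ωF ∈ Λ[2]) (hωFcontr : ∀ X : V, interiorV X ωF = ιι (ω X)) :
    ∀ k : ℕ, k ≤ n → ∀ x : Forms V, x ∈ Λ[k] → ωF ^ (n - k) * x = 0 → x = 0 := by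
  intro k
  induction k using Nat.strong_induction_on with
  | _ k ihk =>
  intro hk x hx h0
  have hlam : Lam n sharp b x = 0 := by
    rcases Nat.lt_or_ge k 2 with hk2 | hk2
    · exact Lam_zero n sharp b hx (by omega)
    · have hy := Lam_mem n sharp b hx
      refine ihk (k - 2) (by omega) (by omega) _ hy ?_
      have hz1 : ωF ^ (n - k + 1) * x = 0 := by
        rw [pow_succ', mul_assoc, h0, mul_zero]
      have hz2 : ωF ^ (n - k + 1 + 1) * x = 0 := by
        rw [pow_succ', mul_assoc, hz1, mul_zero]
      have hp := powL n ω sharp b ωF halt hsharp hsharp' hωF hωFcontr hx (n - k + 1)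
      rw [hz2, hz1, map_zero, smul_zero, add_zero] at hp
      have he : n - (k - 2) = (n - k + 1) + 1 := by omega
      rw [he]
      exact hp.symm
  exact descent n ω sharp b ωF halt hsharp hsharp' hωF hωFcontr hx hk hlam (n - k) le_rfl h0

lemma ascent (halt : ω.IsAlt) (hsharp : ∀ φ : Module.Dual ℝ V, ω (sharp φ) = φ)
    (hsharp' : ∀ X : V, sharp (ω X) = X)
    (hωF : ωF ∈ Λ[2]) (hωFcontr : ∀ X : V, interiorV X ωF = ιι (ω X))
    {j : ℕ} {z : Forms V} (hz : z ∈ Λ[j]) (hn : n ≤ j)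
    (h0 : ωF * z = 0) (hlam : ((Lam n sharp b) ^ (j - n)) z = 0) : z = 0 := by
  suffices H : ∀ m : ℕ, m ≤ j - n → ((Lam n sharp b) ^ (j - n - m)) z = 0 by
    have := H (j - n) le_rfl
    simpa using this
  intro m
  induction m with
  | zero => intro _; simpa using hlam
  | succ m ihm =>
      intro hm
      have hmm := ihm (by omega)
      set t := j - n - m with ht
      have ht1 : (t - 1) + 1 = t := by omega
      have hp := powM n ω sharp b ωF halt hsharp hsharp' hωF hωFcontr hz (t - 1)
      rw [ht1, h0, map_zero, hmm, mul_zero, zero_add] at hp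
      have hco : (2 * (((t - 1 : ℕ) : ℝ) + 1) * ((j : ℝ) - (n : ℝ) - ((t - 1 : ℕ) : ℝ))) ≠ 0 := by
        have hnat : (t - 1) + (m + 1) = j - n := by omega
        have e1 : ((j - n : ℕ) : ℝ) = (j : ℝ) - (n : ℝ) := by
          rw [Nat.cast_sub hn]
        have e2 : ((t - 1 : ℕ) : ℝ) + ((m : ℝ) + 1) = ((j - n : ℕ) : ℝ) := by
          rw [← hnat]; push_cast; ring
        have e3 : (j : ℝ) - (n : ℝ) - ((t - 1 : ℕ) : ℝ) = (m : ℝ) + 1 := by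
          rw [← e1, ← e2]; ring
        rw [e3]
        positivity
      have hzz := (smul_eq_zero.mp hp.symm).resolve_left hco
      have he : j - n - (m + 1) = t - 1 := by omega
      rw [he]
      exact hzz

lemma top_deg [FiniteDimensional ℝ V] (hdim : Module.finrank ℝ V = 2 * n) {j : ℕ}
    (hj : 2 * n < j) : (Λ[j]) = ⊥ := by
  rw [← ExteriorAlgebra.ιMulti_span_fixedDegree, Submodule.span_eq_bot]
  rintro x ⟨ψ, rfl⟩
  have hni : ¬ LinearIndependent ℝ ψ := by
    intro hLI
    have hcard := hLI.fintype_card_le_finrank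
    rw [Fintype.card_fin] at hcard
    have hdd : Module.finrank ℝ (Module.Dual ℝ V) = 2 * n := by
      rw [Subspace.dual_finrank_eq, hdim]
    omega
  exact AlternatingMap.map_linearDependent _ ψ hni

lemma main_surj [FiniteDimensional ℝ V] (hdim : Module.finrank ℝ V = 2 * n)
    (halt : ω.IsAlt) (hsharp : ∀ φ : Module.Dual ℝ V, ω (sharp φ) = φ)
    (hsharp' : ∀ X : V, sharp (ω X) = X)
    (hωF : ωF ∈ Λ[2]) (hωFcontr : ∀ X : V, interiorV X ωF = ιι (ω X)) :
    ∀ (c j : ℕ), 2 * n < j + c → n ≤ j → ∀ z : Forms V, z ∈ Λ[j] →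
      ((Lam n sharp b) ^ (j - n)) z = 0 → z = 0 := by
  intro c
  induction c with
  | zero =>
      intro j hlt hj z hz _
      have hb := top_deg n hdim (by omega : 2 * n < j)
      rw [hb] at hz
      simpa using hz
  | succ c ihc =>
      intro j hlt hj z hz hlam
      rcases Nat.lt_or_ge (2 * n) j with hj2 | hj2
      · have hb := top_deg n hdim hj2
        rw [hb] at hz
        simpa using hz
      · have hw : ωF * z ∈ Λ[j + 2] := by
          have h2 := Submodule.mul_mem_mul hωF hz
          rw [← pow_add] at h2
          have e : 2 + j = j + 2 := by omega
          rwa [e] at h2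
        have hl1 : ((Lam n sharp b) ^ (j - n + 1)) z = 0 := by
          rw [pow_succ', Module.End.mul_apply, hlam, map_zero]
        have hl2 : ((Lam n sharp b) ^ (j - n + 1 + 1)) z = 0 := by
          rw [pow_succ', Module.End.mul_apply, hl1, map_zero]
        have hp := powM n ω sharp b ωF halt hsharp hsharp' hωF hωFcontr hz (j - n + 1)
        rw [hl2, hl1, mul_zero, smul_zero, add_zero] at hp
        have hs2 : ((Lam n sharp b) ^ ((j + 2) - n)) (ωF * z) = 0 := by
          have he : (j + 2) - n = (j - n + 1) + 1 := by omega
          rw [he]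
          exact hp
        have hzero := ihc (j + 2) (by omega) (by omega) (ωF * z) hw hs2
        exact ascent n ω sharp b ωF halt hsharp hsharp' hωF hωFcontr hz hj hzero hlam

end Main

lemma fd [FiniteDimensional ℝ V] (k : ℕ) :
    FiniteDimensional ℝ (Λ[k] : Submodule ℝ (Forms V)) := by
  classical
  set D := Module.finrank ℝ (Module.Dual ℝ V) with hD
  let bD : Module.Basis (Fin D) ℝ (Module.Dual ℝ V) := Module.finBasis ℝ (Module.Dual ℝ V)
  have hspan : (Λ[k] : Submodule ℝ (Forms V)) = Submodule.span ℝ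
      (Set.range fun f : Fin k → Fin D =>
        ExteriorAlgebra.ιMulti ℝ k fun i => bD (f i)) := by
    refine le_antisymm ?_ ?_
    · rw [← ExteriorAlgebra.ιMulti_span_fixedDegree, Submodule.span_le]
      rintro x ⟨ψ, rfl⟩
      have hψ : ψ = fun i => ∑ j, bD.repr (ψ i) j • bD j := by
        funext i
        exact (Module.Basis.sum_repr bD (ψ i)).symm
      have expand : ExteriorAlgebra.ιMulti ℝ k ψ
          = ∑ r : Fin k → Fin D, (∏ i, bD.repr (ψ i) (r i)) •
              ExteriorAlgebra.ιMulti ℝ k (fun i => bD (r i)) := by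
        conv_lhs => rw [hψ]
        rw [show (ExteriorAlgebra.ιMulti ℝ k (fun i => ∑ j, bD.repr (ψ i) j • bD j))
            = (ExteriorAlgebra.ιMulti ℝ k (M := Module.Dual ℝ V)).toMultilinearMap
              (fun i => ∑ j, bD.repr (ψ i) j • bD j) from rfl]
        rw [MultilinearMap.map_sum]
        refine Finset.sum_congr rfl fun r _ => ?_
        rw [show ((ExteriorAlgebra.ιMulti ℝ k (M := Module.Dual ℝ V)).toMultilinearMap
            (fun i => bD.repr (ψ i) (r i) • bD (r i)))
            = (ExteriorAlgebra.ιMulti ℝ k (M := Module.Dual ℝ V)).toMultilinearMap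
              (fun i => (fun i' => bD.repr (ψ i') (r i')) i • (fun i' => bD (r i')) i) from rfl]
        rw [MultilinearMap.map_smul_univ]
        rfl
      rw [expand]
      refine Submodule.sum_mem _ fun r _ => ?_
      exact Submodule.smul_mem _ _ (Submodule.subset_span ⟨r, rfl⟩)
    · rw [Submodule.span_le]
      rintro x ⟨f, rfl⟩
      exact ExteriorAlgebra.ιMulti_range ℝ k ⟨_, rfl⟩
  rw [hspan]
  exact FiniteDimensional.span_of_finite ℝ (Set.finite_range _)


end HLaux

/- STATEMENT 13: hard Lefschetz at the level of the exterior algebra: for `0 ≤ r ≤ n`,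
`L^r : Λ^{n−r} V* → Λ^{n+r} V*`, `φ ↦ ω^r ∧ φ`, is a linear isomorphism (a bijection
between the indicated exterior powers; it is linear since it is multiplication). -/
theorem hard_lefschetz_linear
    {V : Type*} [AddCommGroup V] [Module ℝ V] [FiniteDimensional ℝ V]
    (n : ℕ) (hdim : Module.finrank ℝ V = 2 * n)
    (ω : LinearMap.BilinForm ℝ V) (halt : ω.IsAlt) (hnd : ω.Nondegenerate)
    (sharp : Module.Dual ℝ V →ₗ[ℝ] V)
    (hsharp : ∀ φ : Module.Dual ℝ V, ω (sharp φ) = φ)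
    (hsharp' : ∀ X : V, sharp (ω X) = X)
    -- `ωF` is the symplectic form `ω`, viewed as a 2-form: `ι_X ωF = ω(X, ·) = X^♭`
    (ωF : Forms V) (hωF : ωF ∈ ⋀[ℝ]^2 (Module.Dual ℝ V))
    (hωFcontr : ∀ X : V, interiorV X ωF = ExteriorAlgebra.ι ℝ (ω X))
    (r : ℕ) (hr : r ≤ n) :
    Set.BijOn (fun x : Forms V => ωF ^ r * x)
      (⋀[ℝ]^(n - r) (Module.Dual ℝ V) : Set (Forms V))
      (⋀[ℝ]^(n + r) (Module.Dual ℝ V) : Set (Forms V)) := by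
  classical
  set b : Module.Basis (Fin (2 * n)) ℝ V := (Module.finBasis ℝ V).reindex (finCongr hdim) with hb
  set A : Submodule ℝ (Forms V) := ⋀[ℝ]^(n - r) (Module.Dual ℝ V) with hA
  set B : Submodule ℝ (Forms V) := ⋀[ℝ]^(n + r) (Module.Dual ℝ V) with hB
  have hMaps : ∀ x ∈ A, ωF ^ r * x ∈ B := by
    intro x hx
    have h1 := HLaux.pow_mul_mem ωF hωF hx r
    have e : 2 * r + (n - r) = n + r := by omega
    rwa [e] at h1
  have hInjAbs : ∀ x ∈ A, ωF ^ r * x = 0 → x = 0 := by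
    intro x hx h
    refine HLaux.main_inj n ω sharp b ωF halt hsharp hsharp' hωF hωFcontr
      (n - r) (by omega) x hx ?_
    have e : n - (n - r) = r := by omega
    rw [e]
    exact h
  haveI : FiniteDimensional ℝ A := HLaux.fd (n - r)
  haveI : FiniteDimensional ℝ B := HLaux.fd (n + r)
  let F : A →ₗ[ℝ] B := (LinearMap.mulLeft ℝ (ωF ^ r)).restrict hMaps
  have hF : Function.Injective F := by
    intro x y hxy
    have hval : ωF ^ r * (x : Forms V) = ωF ^ r * (y : Forms V) := by
      have := congrArg Subtype.val hxy
      exact this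
    have h0 : ωF ^ r * ((x : Forms V) - y) = 0 := by
      rw [mul_sub, hval, sub_self]
    have := hInjAbs _ (sub_mem x.2 y.2) h0
    exact Subtype.ext (by rwa [← sub_eq_zero])
  have hGmaps : ∀ z ∈ B, ((HLaux.Lam n sharp b) ^ r) z ∈ A := by
    intro z hz
    have h1 := HLaux.Lam_pow_mem n sharp b hz r
    have e : (n + r) - 2 * r = n - r := by omega
    rwa [e] at h1
  let G : B →ₗ[ℝ] A := (((HLaux.Lam n sharp b) ^ r : Forms V →ₗ[ℝ] Forms V)).restrict hGmaps
  have hG : Function.Injective G := by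
    intro z w hzw
    have hval : ((HLaux.Lam n sharp b) ^ r) (z : Forms V)
        = ((HLaux.Lam n sharp b) ^ r) (w : Forms V) := by
      have := congrArg Subtype.val hzw
      simpa [G, LinearMap.restrict_apply] using this
    refine Subtype.ext ?_
    rw [← sub_eq_zero]
    refine HLaux.main_surj n ω sharp b ωF hdim halt hsharp hsharp' hωF hωFcontr
      (n - r + 1) (n + r) (by omega) (by omega) _ (sub_mem z.2 w.2) ?_
    have e : (n + r) - n = r := by omega
    rw [e, map_sub, hval, sub_self]
  have hfr : Module.finrank ℝ A = Module.finrank ℝ B :=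
    le_antisymm (LinearMap.finrank_le_finrank_of_injective hF)
      (LinearMap.finrank_le_finrank_of_injective hG)
  have hFsurj : Function.Surjective F :=
    (LinearMap.injective_iff_surjective_of_finrank_eq_finrank hfr).mp hF
  refine ⟨fun x hx => hMaps x hx, ?_, ?_⟩
  · intro x hx y hy hxy
    have h0 : ωF ^ r * (x - y) = 0 := by
      have hxy : ωF ^ r * x = ωF ^ r * y := hxy
      rw [mul_sub, hxy, sub_self]
    have := hInjAbs _ (sub_mem hx hy) h0
    rwa [← sub_eq_zero]
  · intro z hz
    obtain ⟨x, hx⟩ := hFsurj ⟨z, hz⟩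
    refine ⟨x.1, x.2, ?_⟩
    have := congrArg Subtype.val hx
    exact this
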